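/- Let Ω ⊆ ℝⁿ be measurable, let p : Ω → [1,∞) be bounded measurable, let r : Ω → ℝ be bounded measurable taking both a negative value and a nonnegative value on Ω, and let a ∈ L^∞(Ω) with a ≥ 0. Then there exists a constant b > 0 (depending only on p, r and ‖a‖_∞) such that for every measurable set A ⊆ Ω with 0 < |A| < 1/2 and sup_A r ≥ 0: |A|^{1/p⁻_A} ≤ ‖1_A‖_{L^Φ(Ω)} ≤ b (1+‖a‖_∞)^{1/p⁻_A} · max{ |A|^{1/p⁺_A} (log(e + 1/|A|))^{r⁺_A}, |A|^{1/p⁻_A} (log(1+e))^{r⁺_A} }. -/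

import Mathlib

open MeasureTheory Set
open scoped ENNReal

/-- The function `Φ(x,t) = t^{p(x)} + a(x) t^{p(x)} (log(e+t))^{r(x)}`. -/
noncomputable def Phi2 {n : ℕ} (p r a : EuclideanSpace ℝ (Fin n) → ℝ)
    (x : EuclideanSpace ℝ (Fin n)) (t : ℝ) : ℝ :=
  t ^ p x + a x * t ^ p x * (Real.log (Real.exp 1 + t)) ^ r x

/-- The Luxemburg (quasi-)norm `‖u‖_{L^Φ(Ω)} = inf{λ > 0 : ∫_Ω Φ(x,|u(x)|/λ) dx ≤ 1}`,
valued in `ℝ≥0∞`, with `inf ∅ = ∞`. -/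
noncomputable def luxNorm {n : ℕ} (Ω : Set (EuclideanSpace ℝ (Fin n)))
    (Φ : EuclideanSpace ℝ (Fin n) → ℝ → ℝ)
    (u : EuclideanSpace ℝ (Fin n) → ℝ) : ℝ≥0∞ :=
  sInf ((fun l : ℝ => ENNReal.ofReal l) ''
    {l : ℝ | 0 < l ∧ (∫⁻ x in Ω, ENNReal.ofReal (Φ x (|u x| / l))) ≤ 1})

private lemma one_le_rpow' {x y : ℝ} (hx : 1 ≤ x) (hy : 0 ≤ y) : 1 ≤ x ^ y := by
  rw [← Real.rpow_zero x]; exact Real.rpow_le_rpow_of_exponent_le hx hy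

set_option maxHeartbeats 1000000 in
/-- when `r` takes both a negative and a nonnegative value on `Ω`,
there is a constant `b > 0` such that for every measurable `A ⊆ Ω` with
`0 < |A| < 1/2` and `sup_A r ≥ 0`:
`|A|^{1/p⁻_A} ≤ ‖1_A‖_{L^Φ(Ω)} ≤ b(1+‖a‖_∞)^{1/p⁻_A} ·
max{|A|^{1/p⁺_A}(log(e+1/|A|))^{r⁺_A}, |A|^{1/p⁻_A}(log(1+e))^{r⁺_A}}`. -/
theorem stmt_14 {n : ℕ}
    (Ω : Set (EuclideanSpace ℝ (Fin n))) (hΩm : MeasurableSet Ω)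
    (p r a : EuclideanSpace ℝ (Fin n) → ℝ)
    (hpm : Measurable p) (hp1 : ∀ x ∈ Ω, 1 ≤ p x) (hpB : BddAbove (p '' Ω))
    (hrm : Measurable r) (hrB : BddAbove (r '' Ω)) (hrb : BddBelow (r '' Ω))
    (hrneg : ∃ x ∈ Ω, r x < 0) (hrpos : ∃ x ∈ Ω, 0 ≤ r x)
    (ham : Measurable a) (ha0 : ∀ x ∈ Ω, 0 ≤ a x) (haB : BddAbove (a '' Ω)) :
    ∃ b : ℝ, 0 < b ∧
      ∀ A : Set (EuclideanSpace ℝ (Fin n)), A ⊆ Ω → MeasurableSet A →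
        0 < volume A → volume A < 1/2 → 0 ≤ sSup (r '' A) →
        ENNReal.ofReal ((volume A).toReal ^ (1 / sInf (p '' A))) ≤
          luxNorm Ω (Phi2 p r a) (A.indicator 1) ∧
        luxNorm Ω (Phi2 p r a) (A.indicator 1) ≤
          ENNReal.ofReal (b * (1 + sSup (a '' Ω)) ^ (1 / sInf (p '' A)) *
            max ((volume A).toReal ^ (1 / sSup (p '' A)) *
                  (Real.log (Real.exp 1 + 1 / (volume A).toReal)) ^ sSup (r '' A))
                ((volume A).toReal ^ (1 / sInf (p '' A)) *
                  (Real.log (1 + Real.exp 1)) ^ sSup (r '' A))) := by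
  classical
  obtain ⟨x₀, hx₀Ω, _⟩ := hrneg
  set R := sSup (r '' Ω) with hR_def
  set K := sSup (a '' Ω) with hK_def
  set C := Real.log (1 + Real.exp 1) with hC_def
  have hK0 : 0 ≤ K := le_trans (ha0 x₀ hx₀Ω) (le_csSup haB ⟨x₀, hx₀Ω, rfl⟩)
  have hC1 : 1 < C := by
    have h1 : Real.exp 1 < 1 + Real.exp 1 := by linarith [Real.exp_pos 1]
    calc (1:ℝ) = Real.log (Real.exp 1) := (Real.log_exp 1).symm
      _ < C := Real.log_lt_log (Real.exp_pos 1) h1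
  set b := C ^ max R 0 with hb_def
  have hb1 : 1 ≤ b := one_le_rpow' hC1.le (le_max_right _ _)
  have hb0 : 0 < b := lt_of_lt_of_le one_pos hb1
  refine ⟨b, hb0, ?_⟩
  intro A hAΩ hAm hA0 hA2 hrp0
  set t := (volume A).toReal with ht_def
  have hAfin : volume A ≠ ⊤ := (hA2.trans (by norm_num)).ne
  have ht0 : 0 < t := ENNReal.toReal_pos hA0.ne' hAfin
  have ht2 : t < 1/2 := by
    have h := (ENNReal.toReal_lt_toReal hAfin (by norm_num : (1/2 : ℝ≥0∞) ≠ ⊤)).mpr hA2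
    simpa using h
  have ht1 : t < 1 := by linarith
  have hAvol : volume A = ENNReal.ofReal t := (ENNReal.ofReal_toReal hAfin).symm
  have hAne : A.Nonempty := by
    by_contra h
    rw [Set.not_nonempty_iff_eq_empty] at h
    simp [h] at hA0
  obtain ⟨z, hzA⟩ := hAne
  have hpA_ne : (p '' A).Nonempty := ⟨p z, z, hzA, rfl⟩
  have hpA_bddb : BddBelow (p '' A) := ⟨1, by rintro y ⟨x, hx, rfl⟩; exact hp1 x (hAΩ hx)⟩
  have hpA_bdda : BddAbove (p '' A) := hpB.mono (image_mono hAΩ)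
  have hrA_bdda : BddAbove (r '' A) := hrB.mono (image_mono hAΩ)
  set pm := sInf (p '' A) with hpm_def
  set pp := sSup (p '' A) with hpp_def
  set rp := sSup (r '' A) with hrp_def
  have hpm1 : 1 ≤ pm := le_csInf hpA_ne (by rintro y ⟨x, hx, rfl⟩; exact hp1 x (hAΩ hx))
  have hpm0 : 0 < pm := lt_of_lt_of_le one_pos hpm1
  have hpm_le : ∀ x ∈ A, pm ≤ p x := fun x hx => csInf_le hpA_bddb ⟨x, hx, rfl⟩
  have hle_pp : ∀ x ∈ A, p x ≤ pp := fun x hx => le_csSup hpA_bdda ⟨x, hx, rfl⟩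
  have hpm_pp : pm ≤ pp := (hpm_le z hzA).trans (hle_pp z hzA)
  have hpp1 : 1 ≤ pp := hpm1.trans hpm_pp
  have hpp0 : 0 < pp := lt_of_lt_of_le one_pos hpp1
  have hr_le : ∀ x ∈ A, r x ≤ rp := fun x hx => le_csSup hrA_bdda ⟨x, hx, rfl⟩
  have hrR : ∀ x ∈ Ω, r x ≤ R := fun x hx => le_csSup hrB ⟨x, hx, rfl⟩
  have hrpR : rp ≤ max R 0 := by
    refine le_trans ?_ (le_max_left R 0)
    exact csSup_le_csSup hrB ⟨r z, z, hzA, rfl⟩ (image_mono hAΩ)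
  have ha_le : ∀ x ∈ Ω, a x ≤ K := fun x hx => le_csSup haB ⟨x, hx, rfl⟩
  set L := Real.log (Real.exp 1 + 1/t) with hL_def
  have hCL : C ≤ L := by
    apply Real.log_le_log (by positivity)
    have h1t : 1 ≤ 1/t := by
      rw [le_div_iff₀ ht0]; linarith
    linarith
  have hL1 : 1 < L := lt_of_lt_of_le hC1 hCL
  have hL0 : 0 < L := lt_trans one_pos hL1
  set M := max (t ^ (1/pp) * L ^ rp) (t ^ (1/pm) * C ^ rp) with hM_def
  have hM1 : t ^ (1/pp) * L ^ rp ≤ M := le_max_left _ _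
  have hM2 : t ^ (1/pm) * C ^ rp ≤ M := le_max_right _ _
  have hMpos : 0 < M := lt_of_lt_of_le (by positivity) hM1
  set lam := b * (1 + K) ^ (1/pm) * M with hlam_def
  have hlam_pos : 0 < lam := by positivity
  have h1K : (1:ℝ) ≤ 1 + K := by linarith
  have hfac1 : 1 ≤ b * (1 + K) ^ (1/pm) := by
    have h := one_le_rpow' h1K (by positivity : (0:ℝ) ≤ 1/pm)
    calc (1:ℝ) = 1 * 1 := by ring
      _ ≤ b * (1 + K) ^ (1/pm) := mul_le_mul hb1 h zero_le_one hb0.le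
  have hLrp1 : 1 ≤ L ^ rp := one_le_rpow' hL1.le hrp0
  have hlam_ge_t : t ≤ lam := by
    have h1 : t ≤ t ^ (1/pp) := by
      nth_rewrite 1 [← Real.rpow_one t]
      apply Real.rpow_le_rpow_of_exponent_ge ht0 ht1.le
      rw [div_le_one hpp0]; exact hpp1
    have h2 : t ^ (1/pp) ≤ t ^ (1/pp) * L ^ rp :=
      le_mul_of_one_le_right (Real.rpow_nonneg ht0.le _) hLrp1
    have h3 : M ≤ lam := le_mul_of_one_le_left hMpos.le hfac1
    linarith [hM1]
  -- the shared integral bound machinery (upper bound)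
  have hbound : ∀ c : ℝ, 0 ≤ c → (∀ x ∈ A, Phi2 p r a x (1/lam) ≤ c) → c * t ≤ 1 →
      (∫⁻ x in Ω, ENNReal.ofReal (Phi2 p r a x (|A.indicator 1 x| / lam))) ≤ 1 := by
    intro c hc hpt hct
    have step1 : (∫⁻ x in Ω, ENNReal.ofReal (Phi2 p r a x (|A.indicator 1 x| / lam)))
        ≤ ∫⁻ x in Ω, A.indicator (fun _ => ENNReal.ofReal c) x := by
      apply setLIntegral_mono (measurable_const.indicator hAm)
      intro x hxΩ
      by_cases hxA : x ∈ A
      · rw [Set.indicator_of_mem hxA, Set.indicator_of_mem hxA, Pi.one_apply, abs_one]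
        exact ENNReal.ofReal_le_ofReal (hpt x hxA)
      · rw [Set.indicator_of_notMem hxA, Set.indicator_of_notMem hxA]
        have hp0 : p x ≠ 0 := by
          have := hp1 x hxΩ; linarith
        simp [Phi2, Real.zero_rpow hp0]
    have step2 : (∫⁻ x in Ω, A.indicator (fun _ => ENNReal.ofReal c) x)
        = ENNReal.ofReal c * volume A := by
      rw [lintegral_indicator hAm, setLIntegral_const,
        Measure.restrict_apply hAm, Set.inter_eq_self_of_subset_left hAΩ]
    calc (∫⁻ x in Ω, ENNReal.ofReal (Phi2 p r a x (|A.indicator 1 x| / lam)))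
        ≤ ENNReal.ofReal c * volume A := step1.trans_eq step2
      _ = ENNReal.ofReal (c * t) := by rw [hAvol, ← ENNReal.ofReal_mul hc]
      _ ≤ 1 := ENNReal.ofReal_le_one.mpr hct
  -- upper bound
  have hupper : luxNorm Ω (Phi2 p r a) (A.indicator 1) ≤ ENNReal.ofReal lam := by
    rw [luxNorm]
    apply sInf_le
    refine ⟨lam, ⟨hlam_pos, ?_⟩, rfl⟩
    set s := 1/lam with hs_def
    have hs0 : 0 < s := by positivity
    set Ll := Real.log (Real.exp 1 + s) with hLl_def
    have hLl1 : 1 ≤ Ll := by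
      rw [hLl_def, ← Real.log_exp 1]
      apply Real.log_le_log (Real.exp_pos 1)
      rw [Real.exp_log (Real.exp_pos 1)]
      linarith
    have hLl0 : 0 < Ll := lt_of_lt_of_le one_pos hLl1
    rcases le_or_gt 1 lam with hlam1 | hlam1
    · -- lam ≥ 1 : use exponent pm and constant b
      have hs1 : s ≤ 1 := by rw [hs_def, div_le_one hlam_pos]; exact hlam1
      have hLlC : Ll ≤ C := by
        apply Real.log_le_log (by positivity)
        linarith
      apply hbound (s ^ pm * ((1 + K) * b)) (by positivity)
      · intro x hxA
        have hxΩ := hAΩ hxA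
        have h1 : s ^ p x ≤ s ^ pm :=
          Real.rpow_le_rpow_of_exponent_ge hs0 hs1 (hpm_le x hxA)
        have h2 : Ll ^ r x ≤ b := by
          calc Ll ^ r x ≤ Ll ^ max (r x) 0 :=
                Real.rpow_le_rpow_of_exponent_le hLl1 (le_max_left _ _)
            _ ≤ C ^ max (r x) 0 := Real.rpow_le_rpow hLl0.le hLlC (le_max_right _ _)
            _ ≤ C ^ max R 0 := Real.rpow_le_rpow_of_exponent_le hC1.le
                (max_le_max (hrR x hxΩ) le_rfl)
        have h3 : a x * s ^ p x * Ll ^ r x ≤ K * s ^ pm * b := by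
          have hsp : 0 ≤ s ^ p x := Real.rpow_nonneg hs0.le _
          have hLr : 0 ≤ Ll ^ r x := Real.rpow_nonneg hLl0.le _
          have hstep : a x * s ^ p x ≤ K * s ^ pm :=
            mul_le_mul (ha_le x hxΩ) h1 hsp hK0
          exact mul_le_mul hstep h2 hLr
            (mul_nonneg hK0 (Real.rpow_nonneg hs0.le _))
        have hb1' : s ^ pm ≤ s ^ pm * b :=
          le_mul_of_one_le_right (Real.rpow_nonneg hs0.le _) hb1
        rw [Phi2]
        calc s ^ p x + a x * s ^ p x * Ll ^ r x
            ≤ s ^ pm * b + K * s ^ pm * b := by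
              have := h1.trans hb1'
              linarith
          _ = s ^ pm * ((1 + K) * b) := by ring
      · -- (1/lam)^pm * ((1+K)*b) * t ≤ 1
        have hlam_pow : b * ((1 + K) * t) ≤ lam ^ pm := by
          have e1 : lam ^ pm = b ^ pm * ((1 + K) ^ (1/pm)) ^ pm * M ^ pm := by
            rw [hlam_def, Real.mul_rpow (by positivity) hMpos.le,
              Real.mul_rpow hb0.le (by positivity)]
          have e2 : ((1 + K) ^ (1/pm)) ^ pm = 1 + K := by
            rw [← Real.rpow_mul (by linarith), one_div_mul_cancel hpm0.ne', Real.rpow_one]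
          have e3 : b ≤ b ^ pm := by
            nth_rewrite 1 [← Real.rpow_one b]
            exact Real.rpow_le_rpow_of_exponent_le hb1 hpm1
          have e4 : t ≤ M ^ pm := by
            have h5 : (t ^ (1/pm) * C ^ rp) ^ pm ≤ M ^ pm :=
              Real.rpow_le_rpow (by positivity) hM2 hpm0.le
            have h6 : (t ^ (1/pm) * C ^ rp) ^ pm = t * C ^ (rp * pm) := by
              rw [Real.mul_rpow (by positivity) (by positivity),
                ← Real.rpow_mul ht0.le, one_div_mul_cancel hpm0.ne', Real.rpow_one,
                ← Real.rpow_mul (by positivity)]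
            have h7 : 1 ≤ C ^ (rp * pm) := one_le_rpow' hC1.le (by positivity)
            calc t = t * 1 := by ring
              _ ≤ t * C ^ (rp * pm) := mul_le_mul_of_nonneg_left h7 ht0.le
              _ = (t ^ (1/pm) * C ^ rp) ^ pm := h6.symm
              _ ≤ M ^ pm := h5
          rw [e1, e2]
          have hbpm0 : 0 ≤ b ^ pm := Real.rpow_nonneg hb0.le _
          calc b * ((1 + K) * t) = b * (1 + K) * t := by ring
            _ ≤ b ^ pm * (1 + K) * M ^ pm :=
                mul_le_mul (mul_le_mul_of_nonneg_right e3 (by linarith)) e4 ht0.le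
                  (mul_nonneg hbpm0 (by linarith))
        have hlp : 0 < lam ^ pm := Real.rpow_pos_of_pos hlam_pos _
        rw [hs_def, one_div, Real.inv_rpow hlam_pos.le]
        rw [show (lam ^ pm)⁻¹ * ((1 + K) * b) * t = (b * ((1 + K) * t)) / lam ^ pm by
          rw [div_eq_mul_inv]; ring]
        rw [div_le_one hlp]
        exact hlam_pow
    · -- lam < 1 : use exponent pp and L^rp
      have hs1 : 1 < s := by rw [hs_def, lt_div_iff₀ hlam_pos]; linarith
      have hLlL : Ll ≤ L := by
        apply Real.log_le_log (by positivity)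
        have : s ≤ 1/t := by
          rw [hs_def, div_le_div_iff₀ hlam_pos ht0]
          linarith [hlam_ge_t]
        linarith
      apply hbound (s ^ pp * ((1 + K) * L ^ rp)) (by positivity)
      · intro x hxA
        have hxΩ := hAΩ hxA
        have h1 : s ^ p x ≤ s ^ pp :=
          Real.rpow_le_rpow_of_exponent_le hs1.le (hle_pp x hxA)
        have h2 : Ll ^ r x ≤ L ^ rp := by
          calc Ll ^ r x ≤ Ll ^ rp :=
                Real.rpow_le_rpow_of_exponent_le hLl1 (hr_le x hxA)
            _ ≤ L ^ rp := Real.rpow_le_rpow hLl0.le hLlL hrp0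
        have h3 : a x * s ^ p x * Ll ^ r x ≤ K * s ^ pp * L ^ rp := by
          have hsp : 0 ≤ s ^ p x := Real.rpow_nonneg hs0.le _
          have hLr : 0 ≤ Ll ^ r x := Real.rpow_nonneg hLl0.le _
          have hstep : a x * s ^ p x ≤ K * s ^ pp :=
            mul_le_mul (ha_le x hxΩ) h1 hsp hK0
          exact mul_le_mul hstep h2 hLr
            (mul_nonneg hK0 (Real.rpow_nonneg hs0.le _))
        have hb1' : s ^ pp ≤ s ^ pp * L ^ rp :=
          le_mul_of_one_le_right (Real.rpow_nonneg hs0.le _) hLrp1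
        rw [Phi2]
        calc s ^ p x + a x * s ^ p x * Ll ^ r x
            ≤ s ^ pp * L ^ rp + K * s ^ pp * L ^ rp := by
              have := h1.trans hb1'
              linarith
          _ = s ^ pp * ((1 + K) * L ^ rp) := by ring
      · have hlam_pow : (1 + K) * L ^ rp * t ≤ lam ^ pp := by
          have e1 : lam ^ pp = b ^ pp * ((1 + K) ^ (1/pm)) ^ pp * M ^ pp := by
            rw [hlam_def, Real.mul_rpow (by positivity) hMpos.le,
              Real.mul_rpow hb0.le (by positivity)]
          have e2 : 1 + K ≤ ((1 + K) ^ (1/pm)) ^ pp := by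
            rw [← Real.rpow_mul (by linarith)]
            nth_rewrite 1 [← Real.rpow_one (1 + K)]
            apply Real.rpow_le_rpow_of_exponent_le h1K
            rw [one_div]
            rw [show pm⁻¹ * pp = pp / pm by ring, le_div_iff₀ hpm0]
            linarith
          have e3 : 1 ≤ b ^ pp := one_le_rpow' hb1 hpp0.le
          have e4 : t * L ^ rp ≤ M ^ pp := by
            have h5 : (t ^ (1/pp) * L ^ rp) ^ pp ≤ M ^ pp :=
              Real.rpow_le_rpow (by positivity) hM1 hpp0.le
            have h6 : (t ^ (1/pp) * L ^ rp) ^ pp = t * L ^ (rp * pp) := by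
              rw [Real.mul_rpow (by positivity) (by positivity),
                ← Real.rpow_mul ht0.le, one_div_mul_cancel hpp0.ne', Real.rpow_one,
                ← Real.rpow_mul hL0.le]
            have h7 : L ^ rp ≤ L ^ (rp * pp) := by
              apply Real.rpow_le_rpow_of_exponent_le hL1.le
              nlinarith
            calc t * L ^ rp ≤ t * L ^ (rp * pp) :=
                  mul_le_mul_of_nonneg_left h7 ht0.le
              _ = (t ^ (1/pp) * L ^ rp) ^ pp := h6.symm
              _ ≤ M ^ pp := h5
          rw [e1]
          have hMpp : 0 ≤ M ^ pp := Real.rpow_nonneg hMpos.le _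
          have h1Kpp : 0 ≤ ((1 + K) ^ (1/pm)) ^ pp := Real.rpow_nonneg (by positivity) _
          have hLrp0 : 0 ≤ L ^ rp := Real.rpow_nonneg hL0.le _
          calc (1 + K) * L ^ rp * t = 1 * ((1 + K) * (t * L ^ rp)) := by ring
            _ ≤ b ^ pp * (((1 + K) ^ (1/pm)) ^ pp * M ^ pp) :=
                mul_le_mul e3
                  (mul_le_mul e2 e4 (mul_nonneg ht0.le hLrp0) (by linarith))
                  (mul_nonneg (by linarith) (mul_nonneg ht0.le hLrp0)) (by linarith)
            _ = b ^ pp * ((1 + K) ^ (1/pm)) ^ pp * M ^ pp := by ring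
        have hlp : 0 < lam ^ pp := Real.rpow_pos_of_pos hlam_pos _
        rw [hs_def, one_div, Real.inv_rpow hlam_pos.le]
        rw [show (lam ^ pp)⁻¹ * ((1 + K) * L ^ rp) * t = ((1 + K) * L ^ rp * t) / lam ^ pp by
          rw [div_eq_mul_inv]; ring]
        rw [div_le_one hlp]
        exact hlam_pow
  -- lower bound
  have hlower : ENNReal.ofReal (t ^ (1/pm)) ≤ luxNorm Ω (Phi2 p r a) (A.indicator 1) := by
    rw [luxNorm]
    apply le_sInf
    rintro y ⟨l, ⟨hl0, hint⟩, rfl⟩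
    apply ENNReal.ofReal_le_ofReal
    rcases le_or_gt 1 l with hl1 | hl1
    · exact le_trans (Real.rpow_le_one ht0.le ht1.le (by positivity)) hl1
    · -- l < 1
      have hs1 : 1 ≤ 1/l := by rw [le_div_iff₀ hl0]; linarith
      have hkey : (∫⁻ x in Ω, A.indicator (fun _ => ENNReal.ofReal ((1/l) ^ pm)) x)
          ≤ ∫⁻ x in Ω, ENNReal.ofReal (Phi2 p r a x (|A.indicator 1 x| / l)) := by
        apply lintegral_mono
        intro x
        by_cases hxA : x ∈ A
        · simp only [Set.indicator_of_mem hxA, Pi.one_apply, abs_one]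
          apply ENNReal.ofReal_le_ofReal
          have hxΩ := hAΩ hxA
          have h1 : (1/l) ^ pm ≤ (1/l) ^ p x :=
            Real.rpow_le_rpow_of_exponent_le hs1 (hpm_le x hxA)
          have h2 : 0 ≤ a x * (1/l) ^ p x * Real.log (Real.exp 1 + 1/l) ^ r x := by
            have ha := ha0 x hxΩ
            have hp := Real.rpow_nonneg (by positivity : (0:ℝ) ≤ 1/l) (p x)
            have hlog : (0:ℝ) ≤ Real.log (Real.exp 1 + 1/l) := by
              apply Real.log_nonneg
              linarith [Real.exp_pos 1, (by positivity : (0:ℝ) < 1/l)]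
            have := Real.rpow_nonneg hlog (r x)
            positivity
          rw [Phi2]
          linarith
        · rw [Set.indicator_of_notMem hxA]
          exact zero_le'
      have hkey2 : (∫⁻ x in Ω, A.indicator (fun _ => ENNReal.ofReal ((1/l) ^ pm)) x)
          = ENNReal.ofReal ((1/l) ^ pm * t) := by
        rw [lintegral_indicator hAm, setLIntegral_const,
          Measure.restrict_apply hAm, Set.inter_eq_self_of_subset_left hAΩ, hAvol,
          ← ENNReal.ofReal_mul (by positivity)]
      have h3 : (1/l) ^ pm * t ≤ 1 := by
        rw [← ENNReal.ofReal_le_one, ← hkey2]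
        exact hkey.trans hint
      have h4 : t ≤ l ^ pm := by
        rw [one_div, Real.inv_rpow hl0.le] at h3
        have hlp : 0 < l ^ pm := Real.rpow_pos_of_pos hl0 _
        rw [inv_mul_le_iff₀ hlp, mul_one] at h3
        exact h3
      calc t ^ (1/pm) ≤ (l ^ pm) ^ (1/pm) :=
            Real.rpow_le_rpow ht0.le h4 (by positivity)
        _ = l := by
            rw [← Real.rpow_mul hl0.le, mul_one_div_cancel hpm0.ne', Real.rpow_one]
  exact ⟨hlower, hupper⟩
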